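/- Let ι be a finite type and p, q : ι → ℝ with p_k ≥ 0, q_k ≥ 0, Σ_k p_k = 1, Σ_k q_k = 1, and suppose there exists k with p_k > 0 and q_k > 0. For P ∈ (0,1) define ΔG(P) = Σ_k [ P·p_k·log(P·p_k/(P·p_k + (1−P)·q_k)) + (1−P)·q_k·log((1−P)·q_k/(P·p_k + (1−P)·q_k)) ], where a summand whose leading factor P·p_k (respectively (1−P)·q_k) vanishes is read as 0. Then ΔG is twice differentiable on (0,1) with ΔG''(P) = Σ_k p_k·q_k / (P·(1−P)·(P·p_k + (1−P)·q_k)) > 0 for all P ∈ (0,1), and there exists a unique P* ∈ (0,1) such that ΔG(P*) < ΔG(P) for every P ∈ (0,1) with P ≠ P*. -/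

import Mathlib

open Real Set Filter

open Real Set Filter

private lemma mul_log_div_eq (u s : ℝ) (hu : 0 ≤ u) (hs : s ≠ 0) :
    u * Real.log (u / s) = u * Real.log u - u * Real.log s := by
  rcases hu.eq_or_lt with h | h
  · simp [← h]
  · rw [Real.log_div h.ne' hs]; ring

private lemma F_eq_G {a b : ℝ} (ha : 0 ≤ a) (hb : 0 ≤ b)
    {x : ℝ} (hx : x ∈ Set.Icc (0:ℝ) 1) :
    x*a*Real.log (x*a/(x*a+(1-x)*b)) + (1-x)*b*Real.log ((1-x)*b/(x*a+(1-x)*b))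
      = x*a*Real.log (x*a) + (1-x)*b*Real.log ((1-x)*b)
        - (x*a+(1-x)*b)*Real.log (x*a+(1-x)*b) := by
  obtain ⟨hx0, hx1⟩ := hx
  have hxa : 0 ≤ x*a := mul_nonneg hx0 ha
  have hxb : 0 ≤ (1-x)*b := mul_nonneg (by linarith) hb
  rcases eq_or_lt_of_le (by linarith : (0:ℝ) ≤ x*a+(1-x)*b) with hs | hs
  · have h1 : x*a = 0 := by linarith
    have h2 : (1-x)*b = 0 := by linarith
    rw [h1, h2]; simp
  · rw [mul_log_div_eq _ _ hxa hs.ne', mul_log_div_eq _ _ hxb hs.ne']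
    ring

private lemma hasDerivAt_F {a b : ℝ} (ha : 0 ≤ a) (hb : 0 ≤ b) {P : ℝ}
    (hP : P ∈ Set.Ioo (0:ℝ) 1) :
    HasDerivAt (fun x => x*a*Real.log (x*a/(x*a+(1-x)*b))
        + (1-x)*b*Real.log ((1-x)*b/(x*a+(1-x)*b)))
      (a*Real.log (P*a/(P*a+(1-P)*b)) - b*Real.log ((1-P)*b/(P*a+(1-P)*b))) P := by
  obtain ⟨hP0, hP1⟩ := hP
  rcases ha.eq_or_lt with hA | hA
  · -- a = 0
    rcases hb.eq_or_lt with hB | hB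
    · simp [← hA, ← hB]
      exact hasDerivAt_const P 0
    · -- a = 0, b > 0
      have h : ∀ x ∈ Set.Iio (1:ℝ),
          x*a*Real.log (x*a/(x*a+(1-x)*b)) + (1-x)*b*Real.log ((1-x)*b/(x*a+(1-x)*b))
            = 0 := by
        intro x hx
        have h1 : (0:ℝ) < (1-x)*b := mul_pos (by simp at hx; linarith) hB
        simp [← hA, div_self h1.ne']
      have key : HasDerivAt (fun x => x*a*Real.log (x*a/(x*a+(1-x)*b))
          + (1-x)*b*Real.log ((1-x)*b/(x*a+(1-x)*b))) 0 P := by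
        apply (hasDerivAt_const P (0:ℝ)).congr_of_eventuallyEq
        filter_upwards [Iio_mem_nhds hP1] with x hx using h x hx
      convert key using 1
      have h1 : (0:ℝ) < (1-P)*b := mul_pos (by linarith) hB
      simp [← hA, div_self h1.ne']
  · -- a > 0
    rcases hb.eq_or_lt with hB | hB
    · -- b = 0
      have h : ∀ x ∈ Set.Ioi (0:ℝ),
          x*a*Real.log (x*a/(x*a+(1-x)*b)) + (1-x)*b*Real.log ((1-x)*b/(x*a+(1-x)*b))
            = 0 := by
        intro x hx
        have h1 : (0:ℝ) < x*a := mul_pos hx hA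
        simp [← hB, div_self h1.ne']
      have key : HasDerivAt (fun x => x*a*Real.log (x*a/(x*a+(1-x)*b))
          + (1-x)*b*Real.log ((1-x)*b/(x*a+(1-x)*b))) 0 P := by
        apply (hasDerivAt_const P (0:ℝ)).congr_of_eventuallyEq
        filter_upwards [Ioi_mem_nhds hP0] with x hx using h x hx
      convert key using 1
      have h1 : (0:ℝ) < P*a := mul_pos hP0 hA
      simp [← hB, div_self h1.ne']
    · -- a > 0, b > 0
      have hpa : (0:ℝ) < P*a := mul_pos hP0 hA
      have hqb : (0:ℝ) < (1-P)*b := mul_pos (by linarith) hB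
      have hs : (0:ℝ) < P*a+(1-P)*b := by linarith
      have h1 : HasDerivAt (fun x : ℝ => x*a) (1*a) P := (hasDerivAt_id P).mul_const a
      have h2 : HasDerivAt (fun x : ℝ => (1-x)*b) ((0-1)*b) P :=
        ((hasDerivAt_const P (1:ℝ)).sub (hasDerivAt_id P)).mul_const b
      have hs' : HasDerivAt (fun x : ℝ => x*a+(1-x)*b) (1*a + (0-1)*b) P := h1.add h2
      have hl1 : HasDerivAt (fun x : ℝ => Real.log (x*a)) ((P*a)⁻¹ * (1*a)) P :=
        by have := (Real.hasDerivAt_log hpa.ne').comp P h1; exact this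
      have hl2 : HasDerivAt (fun x : ℝ => Real.log ((1-x)*b)) (((1-P)*b)⁻¹ * ((0-1)*b)) P :=
        by have := (Real.hasDerivAt_log hqb.ne').comp P h2; exact this
      have hl3 : HasDerivAt (fun x : ℝ => Real.log (x*a+(1-x)*b))
          ((P*a+(1-P)*b)⁻¹ * (1*a + (0-1)*b)) P :=
        by have := (Real.hasDerivAt_log hs.ne').comp P hs'; exact this
      have hG : HasDerivAt (fun x : ℝ => x*a*Real.log (x*a) + (1-x)*b*Real.log ((1 - x)*b)
          - (x*a+(1-x)*b)*Real.log (x*a+(1-x)*b))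
          ((1*a*Real.log (P*a) + (P*a)*((P*a)⁻¹ * (1*a)))
            + ((0-1)*b*Real.log ((1-P)*b) + ((1-P)*b)*(((1-P)*b)⁻¹ * ((0-1)*b)))
            - ((1*a + (0-1)*b)*Real.log (P*a+(1-P)*b)
              + (P*a+(1-P)*b)*((P*a+(1-P)*b)⁻¹ * (1*a + (0-1)*b)))) P :=
        ((h1.mul hl1).add (h2.mul hl2)).sub (hs'.mul hl3)
      have key : HasDerivAt (fun x => x*a*Real.log (x*a/(x*a+(1-x)*b))
          + (1-x)*b*Real.log ((1-x)*b/(x*a+(1-x)*b)))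
          ((1*a*Real.log (P*a) + (P*a)*((P*a)⁻¹ * (1*a)))
            + ((0-1)*b*Real.log ((1-P)*b) + ((1-P)*b)*(((1-P)*b)⁻¹ * ((0-1)*b)))
            - ((1*a + (0-1)*b)*Real.log (P*a+(1-P)*b)
              + (P*a+(1-P)*b)*((P*a+(1-P)*b)⁻¹ * (1*a + (0-1)*b)))) P := by
        apply hG.congr_of_eventuallyEq
        have hmem : Set.Ioo (0:ℝ) 1 ∈ nhds P := isOpen_Ioo.mem_nhds ⟨hP0, hP1⟩
        filter_upwards [hmem] with x hx
        exact F_eq_G ha hb (Set.mem_Icc_of_Ioo hx)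
      convert key using 1
      rw [Real.log_div hpa.ne' hs.ne', Real.log_div hqb.ne' hs.ne']
      field_simp
      ring

private lemma hasDerivAt_D {a b : ℝ} (ha : 0 ≤ a) (hb : 0 ≤ b) {P : ℝ}
    (hP : P ∈ Set.Ioo (0:ℝ) 1) :
    HasDerivAt (fun x => a*Real.log (x*a/(x*a+(1-x)*b)) - b*Real.log ((1-x)*b/(x*a+(1-x)*b)))
      (a*b/(P*(1-P)*(P*a+(1-P)*b))) P := by
  obtain ⟨hP0, hP1⟩ := hP
  rcases ha.eq_or_lt with hA | hA
  · rcases hb.eq_or_lt with hB | hB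
    · simp [← hA, ← hB]
      exact hasDerivAt_const P 0
    · -- a = 0, b > 0
      have key : HasDerivAt (fun x => a*Real.log (x*a/(x*a+(1-x)*b))
          - b*Real.log ((1-x)*b/(x*a+(1-x)*b))) 0 P := by
        apply (hasDerivAt_const P (0:ℝ)).congr_of_eventuallyEq
        filter_upwards [Iio_mem_nhds hP1] with x hx
        have h1 : (0:ℝ) < (1-x)*b := mul_pos (by simp at hx; linarith) hB
        simp [← hA, div_self h1.ne']
      convert key using 1
      simp [← hA]
  · rcases hb.eq_or_lt with hB | hB
    · -- a > 0, b = 0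
      have key : HasDerivAt (fun x => a*Real.log (x*a/(x*a+(1-x)*b))
          - b*Real.log ((1-x)*b/(x*a+(1-x)*b))) 0 P := by
        apply (hasDerivAt_const P (0:ℝ)).congr_of_eventuallyEq
        filter_upwards [Ioi_mem_nhds hP0] with x hx
        have h1 : (0:ℝ) < x*a := mul_pos hx hA
        simp [← hB, div_self h1.ne']
      convert key using 1
      simp [← hB]
    · -- a > 0, b > 0
      have hpa : (0:ℝ) < P*a := mul_pos hP0 hA
      have hqb : (0:ℝ) < (1-P)*b := mul_pos (by linarith) hB
      have hs : (0:ℝ) < P*a+(1-P)*b := by linarith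
      have h1 : HasDerivAt (fun x : ℝ => x*a) (1*a) P := (hasDerivAt_id P).mul_const a
      have h2 : HasDerivAt (fun x : ℝ => (1-x)*b) ((0-1)*b) P :=
        ((hasDerivAt_const P (1:ℝ)).sub (hasDerivAt_id P)).mul_const b
      have hs' : HasDerivAt (fun x : ℝ => x*a+(1-x)*b) (1*a + (0-1)*b) P := h1.add h2
      have hl1 : HasDerivAt (fun x : ℝ => Real.log (x*a)) ((P*a)⁻¹ * (1*a)) P :=
        by have := (Real.hasDerivAt_log hpa.ne').comp P h1; exact this
      have hl2 : HasDerivAt (fun x : ℝ => Real.log ((1-x)*b)) (((1-P)*b)⁻¹ * ((0-1)*b)) P :=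
        by have := (Real.hasDerivAt_log hqb.ne').comp P h2; exact this
      have hl3 : HasDerivAt (fun x : ℝ => Real.log (x*a+(1-x)*b))
          ((P*a+(1-P)*b)⁻¹ * (1*a + (0-1)*b)) P :=
        by have := (Real.hasDerivAt_log hs.ne').comp P hs'; exact this
      have hG : HasDerivAt (fun x : ℝ => a*Real.log (x*a) - b*Real.log ((1-x)*b)
          - (a-b)*Real.log (x*a+(1-x)*b))
          ((a * ((P*a)⁻¹ * (1*a)) - b * (((1-P)*b)⁻¹ * ((0-1)*b)))
            - (a-b) * ((P*a+(1-P)*b)⁻¹ * (1*a + (0-1)*b))) P :=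
        ((hl1.const_mul a).sub (hl2.const_mul b)).sub (hl3.const_mul (a-b))
      have key : HasDerivAt (fun x => a*Real.log (x*a/(x*a+(1-x)*b))
          - b*Real.log ((1-x)*b/(x*a+(1-x)*b)))
          ((a * ((P*a)⁻¹ * (1*a)) - b * (((1-P)*b)⁻¹ * ((0-1)*b)))
            - (a-b) * ((P*a+(1-P)*b)⁻¹ * (1*a + (0-1)*b))) P := by
        apply hG.congr_of_eventuallyEq
        filter_upwards [isOpen_Ioo.mem_nhds (⟨hP0, hP1⟩ : P ∈ Set.Ioo (0:ℝ) 1)] with x hx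
        have hxa : (0:ℝ) < x*a := mul_pos hx.1 hA
        have hxb : (0:ℝ) < (1-x)*b := mul_pos (by linarith [hx.2]) hB
        have hxs : (0:ℝ) < x*a+(1-x)*b := by linarith
        rw [Real.log_div hxa.ne' hxs.ne', Real.log_div hxb.ne' hxs.ne']
        ring
      convert key using 1
      have h1P : (0:ℝ) < 1-P := by linarith
      rw [div_eq_iff (by positivity : P*(1-P)*(P*a+(1-P)*b) ≠ 0)]
      field_simp
      ring

private lemma contOn_F {a b : ℝ} (ha : 0 ≤ a) (hb : 0 ≤ b) :
    ContinuousOn (fun x => x*a*Real.log (x*a/(x*a+(1-x)*b))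
      + (1-x)*b*Real.log ((1-x)*b/(x*a+(1-x)*b))) (Set.Icc (0:ℝ) 1) := by
  have c1 : Continuous fun x : ℝ => x*a*Real.log (x*a) :=
    Real.continuous_mul_log.comp (continuous_id.mul continuous_const)
  have c2 : Continuous fun x : ℝ => (1-x)*b*Real.log ((1-x)*b) :=
    Real.continuous_mul_log.comp ((continuous_const.sub continuous_id).mul continuous_const)
  have c3 : Continuous fun x : ℝ => (x*a+(1-x)*b)*Real.log (x*a+(1-x)*b) :=
    Real.continuous_mul_log.comp ((continuous_id.mul continuous_const).add
      ((continuous_const.sub continuous_id).mul continuous_const))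
  exact ((c1.add c2).sub c3).continuousOn.congr (fun x hx => F_eq_G ha hb hx)

private lemma term_nonpos {a b x : ℝ} (ha : 0 ≤ a) (hb : 0 ≤ b) (hx : 0 < x) (hx1 : x < 1) :
    x*a*Real.log (x*a/(x*a+(1-x)*b)) ≤ 0 := by
  rcases ha.eq_or_lt with h | h
  · simp [← h]
  · have hxa : (0:ℝ) < x*a := mul_pos hx h
    have hxb : (0:ℝ) ≤ (1-x)*b := mul_nonneg (by linarith) hb
    apply mul_nonpos_of_nonneg_of_nonpos hxa.le
    exact Real.log_nonpos (by positivity) ((div_le_one (by linarith)).mpr (by linarith))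

private lemma term_neg {a b x : ℝ} (ha : 0 < a) (hb : 0 < b) (hx : 0 < x) (hx1 : x < 1) :
    x*a*Real.log (x*a/(x*a+(1-x)*b)) < 0 := by
  have hxa : (0:ℝ) < x*a := mul_pos hx ha
  have hxb : (0:ℝ) < (1-x)*b := mul_pos (by linarith) hb
  exact mul_neg_of_pos_of_neg hxa
    (Real.log_neg (by positivity) ((div_lt_one (by linarith)).mpr (by linarith)))

/-- For probability vectors `p`, `q` with intersecting supports, the growth-rate
difference `ΔG(P)` (minus the conditional entropy of the scenario given the observation)
is twice differentiable on `(0,1)` with the stated strictly positive second derivative,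
and it has a unique strict global minimizer `P* ∈ (0,1)`.
(Summands with vanishing leading factor are `0` automatically, since `Real.log 0 = 0`
and the leading factor multiplies the whole summand.) -/
theorem stmt_3 {ι : Type*} [Fintype ι] (p q : ι → ℝ)
    (hp : ∀ k, 0 ≤ p k) (hq : ∀ k, 0 ≤ q k)
    (hps : (∑ k, p k) = 1) (hqs : (∑ k, q k) = 1)
    (hsupp : ∃ k, 0 < p k ∧ 0 < q k)
    (ΔG : ℝ → ℝ)
    (hΔG : ∀ P, ΔG P = ∑ k,
      (P * p k * Real.log (P * p k / (P * p k + (1 - P) * q k))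
        + (1 - P) * q k * Real.log ((1 - P) * q k / (P * p k + (1 - P) * q k)))) :
    (∃ ΔG' : ℝ → ℝ, ∀ P ∈ Set.Ioo (0:ℝ) 1,
      HasDerivAt ΔG (ΔG' P) P ∧
      HasDerivAt ΔG' (∑ k, p k * q k / (P * (1 - P) * (P * p k + (1 - P) * q k))) P) ∧
    (∀ P ∈ Set.Ioo (0:ℝ) 1,
      0 < ∑ k, p k * q k / (P * (1 - P) * (P * p k + (1 - P) * q k))) ∧
    (∃! Pstar : ℝ, Pstar ∈ Set.Ioo (0:ℝ) 1 ∧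
      ∀ P ∈ Set.Ioo (0:ℝ) 1, P ≠ Pstar → ΔG Pstar < ΔG P) := by
  obtain ⟨k0, hk0p, hk0q⟩ := hsupp
  have hΔfun : ΔG = fun x => ∑ k,
      (x * p k * Real.log (x * p k / (x * p k + (1 - x) * q k))
        + (1 - x) * q k * Real.log ((1 - x) * q k / (x * p k + (1 - x) * q k))) :=
    funext hΔG
  set ΔG' : ℝ → ℝ := fun x => ∑ k,
      (p k * Real.log (x * p k / (x * p k + (1 - x) * q k))
        - q k * Real.log ((1 - x) * q k / (x * p k + (1 - x) * q k))) with hΔ'def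
  have hD1 : ∀ P ∈ Set.Ioo (0:ℝ) 1, HasDerivAt ΔG (ΔG' P) P := by
    intro P hP
    rw [hΔfun]
    exact HasDerivAt.fun_sum (fun k _ => hasDerivAt_F (hp k) (hq k) hP)
  have hD2 : ∀ P ∈ Set.Ioo (0:ℝ) 1,
      HasDerivAt ΔG' (∑ k, p k * q k / (P * (1 - P) * (P * p k + (1 - P) * q k))) P := by
    intro P hP
    exact HasDerivAt.fun_sum (fun k _ => hasDerivAt_D (hp k) (hq k) hP)
  have hpos : ∀ P ∈ Set.Ioo (0:ℝ) 1,
      0 < ∑ k, p k * q k / (P * (1 - P) * (P * p k + (1 - P) * q k)) := by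
    intro P hP
    obtain ⟨hP0, hP1⟩ := hP
    apply Finset.sum_pos'
    · intro k _
      have hs : (0:ℝ) ≤ P * p k + (1 - P) * q k :=
        add_nonneg (mul_nonneg hP0.le (hp k)) (mul_nonneg (by linarith) (hq k))
      exact div_nonneg (mul_nonneg (hp k) (hq k))
        (mul_nonneg (mul_nonneg hP0.le (by linarith)) hs)
    · refine ⟨k0, Finset.mem_univ k0, ?_⟩
      have h1 : (0:ℝ) < P * p k0 := mul_pos hP0 hk0p
      have h2 : (0:ℝ) < (1 - P) * q k0 := mul_pos (by linarith) hk0q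
      exact div_pos (mul_pos hk0p hk0q)
        (mul_pos (mul_pos hP0 (by linarith)) (by linarith))
  have hneg : ∀ P ∈ Set.Ioo (0:ℝ) 1, ΔG P < 0 := by
    intro P hP
    obtain ⟨hP0, hP1⟩ := hP
    rw [hΔG P]
    have hlt : ∑ k, (P * p k * Real.log (P * p k / (P * p k + (1 - P) * q k))
        + (1 - P) * q k * Real.log ((1 - P) * q k / (P * p k + (1 - P) * q k)))
        < ∑ _k : ι, (0:ℝ) := by
      apply Finset.sum_lt_sum
      · intro k _
        have t1 := term_nonpos (hp k) (hq k) hP0 hP1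
        have t2 := term_nonpos (hq k) (hp k) (by linarith : (0:ℝ) < 1 - P) (by linarith)
        have t2' : (1 - P) * q k * Real.log ((1 - P) * q k / (P * p k + (1 - P) * q k)) ≤ 0 := by
          convert t2 using 4 <;> ring
        linarith
      · refine ⟨k0, Finset.mem_univ k0, ?_⟩
        have t1 := term_neg hk0p hk0q hP0 hP1
        have t2 := term_nonpos (hq k0) (hp k0) (by linarith : (0:ℝ) < 1 - P) (by linarith)
        have t2' : (1 - P) * q k0 * Real.log ((1 - P) * q k0 / (P * p k0 + (1 - P) * q k0)) ≤ 0 := by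
          convert t2 using 4 <;> ring
        linarith
    simpa using hlt
  have h0 : ΔG 0 = 0 := by
    rw [hΔG]
    apply Finset.sum_eq_zero
    intro k _
    rcases (hq k).eq_or_lt with h | h
    · simp [← h]
    · simp [div_self h.ne']
  have h1 : ΔG 1 = 0 := by
    rw [hΔG]
    apply Finset.sum_eq_zero
    intro k _
    rcases (hp k).eq_or_lt with h | h
    · simp [← h]
    · simp [div_self h.ne']
  have hcont : ContinuousOn ΔG (Set.Icc (0:ℝ) 1) := by
    rw [hΔfun]
    exact continuousOn_finset_sum _ (fun k _ => contOn_F (hp k) (hq k))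
  obtain ⟨P0, hP0I, hmin⟩ := isCompact_Icc.exists_isMinOn
    (Set.nonempty_Icc.mpr (by norm_num)) hcont
  have hminle : ∀ y ∈ Set.Icc (0:ℝ) 1, ΔG P0 ≤ ΔG y := fun y hy => hmin hy
  have hhalf : (1/2:ℝ) ∈ Set.Ioo (0:ℝ) 1 := by norm_num
  have hP0neg : ΔG P0 < 0 :=
    lt_of_le_of_lt (hminle _ (Set.Ioo_subset_Icc_self hhalf)) (hneg _ hhalf)
  have hP0mem : P0 ∈ Set.Ioo (0:ℝ) 1 := by
    constructor
    · rcases hP0I.1.eq_or_lt with h | h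
      · exfalso; rw [← h, h0] at hP0neg; exact lt_irrefl 0 hP0neg
      · exact h
    · rcases hP0I.2.lt_or_eq with h | h
      · exact h
      · exfalso; rw [h, h1] at hP0neg; exact lt_irrefl 0 hP0neg
  have hconv : StrictConvexOn ℝ (Set.Icc (0:ℝ) 1) ΔG := by
    apply strictConvexOn_of_deriv2_pos (convex_Icc 0 1) hcont
    intro x hx
    rw [interior_Icc] at hx
    have e1 : deriv ΔG =ᶠ[nhds x] ΔG' := by
      filter_upwards [isOpen_Ioo.mem_nhds hx] with y hy using (hD1 y hy).deriv
    show 0 < deriv (deriv ΔG) x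
    rw [e1.deriv_eq, (hD2 x hx).deriv]
    exact hpos x hx
  have key : ∀ Q ∈ Set.Ioo (0:ℝ) 1, Q ≠ P0 → ΔG P0 < ΔG Q := by
    intro Q hQ hne
    rcases (hminle Q (Set.Ioo_subset_Icc_self hQ)).lt_or_eq with h | h
    · exact h
    · exfalso
      have hmid := hconv.2 (Set.Ioo_subset_Icc_self hP0mem) (Set.Ioo_subset_Icc_self hQ)
        (Ne.symm hne) (by norm_num : (0:ℝ) < 1/2) (by norm_num : (0:ℝ) < 1/2) (by norm_num)
      simp only [smul_eq_mul] at hmid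
      have hmidmem : (1/2:ℝ) * P0 + (1/2) * Q ∈ Set.Icc (0:ℝ) 1 := by
        obtain ⟨hq1, hq2⟩ := Set.Ioo_subset_Icc_self hQ
        obtain ⟨hp1, hp2⟩ := hP0I
        constructor <;> [linarith; linarith]
      have := hminle _ hmidmem
      linarith
  refine ⟨⟨ΔG', fun P hP => ⟨hD1 P hP, hD2 P hP⟩⟩, hpos, P0, ⟨hP0mem, key⟩, ?_⟩
  intro y hy
  by_contra hne
  have hy1 := key y hy.1 hne
  have hy2 := hy.2 P0 hP0mem (fun h => hne h.symm)
  linarith
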